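/- Let a,b>0, γ∈ℝ, γ_* := −4(1/a+1/b), and define N_γ := {κ>0 : |γ·sinh(κa)/(2κ) + sinh(κ(a+b))/sinh(κb)| ≤ 1 + sinh(κa)/sinh(κb)}. Then: (i) if γ ≥ 0, N_γ is empty; (ii) if γ_* ≤ γ < 0, then N_γ = (0,κ₁], where κ₁ is the unique positive root of γ/(2κ) = −tanh(κa/2) − tanh(κb/2); (iii) if γ < γ_*, then N_γ = [κ₂,κ₁], where κ₁ is as above and κ₂ is the unique positive root of γ/(2κ) = −coth(κa/2) − coth(κb/2). -/

import Mathlib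

open Real Set

private lemma xcosh_gt_sinh {x : ℝ} (hx : 0 < x) : Real.sinh x < x * Real.cosh x := by
  have h : StrictMonoOn (fun y : ℝ => y * Real.cosh y - Real.sinh y) (Set.Ici 0) := by
    apply strictMonoOn_of_deriv_pos (convex_Ici 0)
    · fun_prop
    · intro y hy
      rw [interior_Ici] at hy
      have hd : HasDerivAt (fun y : ℝ => y * Real.cosh y - Real.sinh y)
          (1 * Real.cosh y + y * Real.sinh y - Real.cosh y) y :=
        ((hasDerivAt_id y).mul (Real.hasDerivAt_cosh y)).sub (Real.hasDerivAt_sinh y)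
      rw [hd.deriv]
      have hs : 0 < Real.sinh y := Real.sinh_pos_iff.2 hy
      have hy' : (0:ℝ) < y := hy
      nlinarith [mul_pos hy' hs]
  have := h Set.self_mem_Ici (le_of_lt hx) hx
  simpa using this

private lemma sinh_cosh_gt_self {x : ℝ} (hx : 0 < x) : x < Real.sinh x * Real.cosh x := by
  have h1 : 2 * x < Real.sinh (2 * x) := Real.self_lt_sinh_iff.2 (by linarith)
  rw [Real.sinh_two_mul] at h1
  linarith

private lemma coth_lt_coth {x y : ℝ} (hx : 0 < x) (hxy : x < y) :
    x * Real.cosh x / Real.sinh x < y * Real.cosh y / Real.sinh y := by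
  have h : StrictMonoOn (fun y : ℝ => y * Real.cosh y / Real.sinh y) (Set.Ioi 0) := by
    apply strictMonoOn_of_deriv_pos (convex_Ioi 0)
    · apply ContinuousOn.div (by fun_prop) (Real.continuous_sinh.continuousOn)
      intro y hy
      exact ne_of_gt (Real.sinh_pos_iff.2 hy)
    · intro y hy
      rw [interior_Ioi] at hy
      have hs : 0 < Real.sinh y := Real.sinh_pos_iff.2 hy
      have hd : HasDerivAt (fun y : ℝ => y * Real.cosh y / Real.sinh y)
          (((1 * Real.cosh y + y * Real.sinh y) * Real.sinh y - y * Real.cosh y * Real.cosh y) /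
            Real.sinh y ^ 2) y :=
        ((hasDerivAt_id y).mul (Real.hasDerivAt_cosh y)).div (Real.hasDerivAt_sinh y) hs.ne'
      rw [hd.deriv]
      apply div_pos _ (by positivity)
      have h1 := sinh_cosh_gt_self hy
      have h2 := Real.cosh_sq y
      have h3 : y * Real.cosh y ^ 2 = y * (Real.sinh y ^ 2 + 1) := by rw [h2]
      nlinarith [h1, h3]
  exact h (Set.mem_Ioi.2 hx) (Set.mem_Ioi.2 (hx.trans hxy)) hxy

private lemma tanh_pos' {x : ℝ} (hx : 0 < x) : 0 < Real.tanh x := by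
  rw [Real.tanh_eq_sinh_div_cosh]
  exact div_pos (Real.sinh_pos_iff.2 hx) (Real.cosh_pos x)

private lemma tanh_lt_tanh' {x y : ℝ} (hxy : x < y) : Real.tanh x < Real.tanh y := by
  rw [Real.tanh_eq_sinh_div_cosh, Real.tanh_eq_sinh_div_cosh,
    div_lt_div_iff₀ (Real.cosh_pos x) (Real.cosh_pos y)]
  have h := Real.sinh_sub x y
  have h2 : Real.sinh (x - y) < 0 := Real.sinh_neg_iff.2 (by linarith)
  linarith

private lemma mem_char (a b γ κ : ℝ) (ha : 0 < a) (hb : 0 < b) (hκ : 0 < κ) :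
    (|γ * Real.sinh (κ * a) / (2 * κ) + Real.sinh (κ * (a + b)) / Real.sinh (κ * b)| ≤
        1 + Real.sinh (κ * a) / Real.sinh (κ * b)) ↔
    (2 * κ * (Real.tanh (κ * a / 2) + Real.tanh (κ * b / 2)) ≤ -γ ∧
      -γ ≤ 2 * κ * (Real.cosh (κ * a / 2) / Real.sinh (κ * a / 2) +
        Real.cosh (κ * b / 2) / Real.sinh (κ * b / 2))) := by
  have hsa : 0 < Real.sinh (κ * a / 2) := Real.sinh_pos_iff.2 (by positivity)
  have hsb : 0 < Real.sinh (κ * b / 2) := Real.sinh_pos_iff.2 (by positivity)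
  have hca : 0 < Real.cosh (κ * a / 2) := Real.cosh_pos _
  have hcb : 0 < Real.cosh (κ * b / 2) := Real.cosh_pos _
  set sa := Real.sinh (κ * a / 2)
  set sb := Real.sinh (κ * b / 2)
  set ca := Real.cosh (κ * a / 2)
  set cb := Real.cosh (κ * b / 2)
  have hca2 : ca ^ 2 = sa ^ 2 + 1 := Real.cosh_sq _
  have hcb2 : cb ^ 2 = sb ^ 2 + 1 := Real.cosh_sq _
  have hSa : Real.sinh (κ * a) = 2 * sa * ca := by
    rw [show κ * a = 2 * (κ * a / 2) by ring, Real.sinh_two_mul]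
  have hSb : Real.sinh (κ * b) = 2 * sb * cb := by
    rw [show κ * b = 2 * (κ * b / 2) by ring, Real.sinh_two_mul]
  have hCa : Real.cosh (κ * a) = 1 + 2 * sa ^ 2 := by
    rw [show κ * a = 2 * (κ * a / 2) by ring, Real.cosh_two_mul, hca2]; ring
  have hCb : Real.cosh (κ * b) = 1 + 2 * sb ^ 2 := by
    rw [show κ * b = 2 * (κ * b / 2) by ring, Real.cosh_two_mul, hcb2]; ring
  have hSab : Real.sinh (κ * (a + b)) =
      (2 * sa * ca) * (1 + 2 * sb ^ 2) + (1 + 2 * sa ^ 2) * (2 * sb * cb) := by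
    rw [show κ * (a + b) = κ * a + κ * b by ring, Real.sinh_add, hSa, hSb, hCa, hCb]
  have hta : Real.tanh (κ * a / 2) = sa / ca := Real.tanh_eq_sinh_div_cosh _
  have htb : Real.tanh (κ * b / 2) = sb / cb := Real.tanh_eq_sinh_div_cosh _
  rw [hSa, hSb, hSab, hta, htb, abs_le]
  have key1 :
      γ * (2 * sa * ca) / (2 * κ) +
        ((2 * sa * ca) * (1 + 2 * sb ^ 2) + (1 + 2 * sa ^ 2) * (2 * sb * cb)) / (2 * sb * cb) ≤
        1 + 2 * sa * ca / (2 * sb * cb) ↔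
      2 * κ * (sa / ca + sb / cb) ≤ -γ := by
    rw [← sub_nonneg, ← sub_nonneg (a := -γ)]
    have hid : 1 + 2 * sa * ca / (2 * sb * cb) -
        (γ * (2 * sa * ca) / (2 * κ) +
          ((2 * sa * ca) * (1 + 2 * sb ^ 2) + (1 + 2 * sa ^ 2) * (2 * sb * cb)) / (2 * sb * cb)) =
        (sa * ca / κ) * (-γ - 2 * κ * (sa / ca + sb / cb)) := by
      field_simp
      ring
    rw [hid]
    have hpos : 0 < sa * ca / κ := by positivity
    rw [mul_nonneg_iff_of_pos_left hpos]
  have key2 :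
      -(1 + 2 * sa * ca / (2 * sb * cb)) ≤
        γ * (2 * sa * ca) / (2 * κ) +
          ((2 * sa * ca) * (1 + 2 * sb ^ 2) + (1 + 2 * sa ^ 2) * (2 * sb * cb)) / (2 * sb * cb) ↔
      -γ ≤ 2 * κ * (ca / sa + cb / sb) := by
    rw [← sub_nonneg, ← sub_nonneg (a := 2 * κ * (ca / sa + cb / sb))]
    have hid : γ * (2 * sa * ca) / (2 * κ) +
        ((2 * sa * ca) * (1 + 2 * sb ^ 2) + (1 + 2 * sa ^ 2) * (2 * sb * cb)) / (2 * sb * cb) -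
        -(1 + 2 * sa * ca / (2 * sb * cb)) =
        (sa * ca / κ) * (2 * κ * (ca / sa + cb / sb) - -γ) := by
      field_simp
      linear_combination (-(2*κ*sb*cb)) * hca2 + (-(2*κ*sa*ca)) * hcb2
    rw [hid]
    have hpos : 0 < sa * ca / κ := by positivity
    rw [mul_nonneg_iff_of_pos_left hpos]
  constructor
  · rintro ⟨h1, h2⟩
    exact ⟨key1.1 h2, by linarith [key2.1 h1]⟩
  · rintro ⟨h1, h2⟩
    exact ⟨key2.2 (by linarith), key1.2 h1⟩

/-- strict monotonicity of `κ ↦ 2κ(tanh(κa/2)+tanh(κb/2))`. -/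
private lemma P_strictMono (a b : ℝ) (ha : 0 < a) (hb : 0 < b) {x y : ℝ} (hx : 0 < x)
    (hxy : x < y) :
    2 * x * (Real.tanh (x * a / 2) + Real.tanh (x * b / 2)) <
      2 * y * (Real.tanh (y * a / 2) + Real.tanh (y * b / 2)) := by
  have h1 : Real.tanh (x * a / 2) < Real.tanh (y * a / 2) := by
    apply tanh_lt_tanh'; nlinarith
  have h2 : Real.tanh (x * b / 2) < Real.tanh (y * b / 2) := by
    apply tanh_lt_tanh'; nlinarith
  have p1 : 0 < Real.tanh (x * a / 2) := tanh_pos' (by positivity)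
  have p2 : 0 < Real.tanh (x * b / 2) := tanh_pos' (by positivity)
  apply mul_lt_mul'' (by linarith) (by linarith) (by linarith) (by linarith)

/-- strict monotonicity of `κ ↦ 2κ(coth(κa/2)+coth(κb/2))`. -/
private lemma Q_strictMono (a b : ℝ) (ha : 0 < a) (hb : 0 < b) {x y : ℝ} (hx : 0 < x)
    (hxy : x < y) :
    2 * x * (Real.cosh (x * a / 2) / Real.sinh (x * a / 2) +
        Real.cosh (x * b / 2) / Real.sinh (x * b / 2)) <
      2 * y * (Real.cosh (y * a / 2) / Real.sinh (y * a / 2) +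
        Real.cosh (y * b / 2) / Real.sinh (y * b / 2)) := by
  have ha' : a ≠ 0 := ne_of_gt ha
  have hb' : b ≠ 0 := ne_of_gt hb
  have hA := coth_lt_coth (x := x * a / 2) (y := y * a / 2) (by positivity) (by nlinarith)
  have hB := coth_lt_coth (x := x * b / 2) (y := y * b / 2) (by positivity) (by nlinarith)
  have hA' := mul_lt_mul_of_pos_left hA (show (0:ℝ) < 4 / a by positivity)
  have hB' := mul_lt_mul_of_pos_left hB (show (0:ℝ) < 4 / b by positivity)
  have key : ∀ c z : ℝ, c ≠ 0 →
      4 / c * (z * c / 2 * Real.cosh (z * c / 2) / Real.sinh (z * c / 2)) =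
      2 * z * (Real.cosh (z * c / 2) / Real.sinh (z * c / 2)) := by
    intro c z hc
    have h4 : 4 / c * (z * c / 2) = 2 * z := by field_simp; ring
    calc 4 / c * (z * c / 2 * Real.cosh (z * c / 2) / Real.sinh (z * c / 2)) =
        (4 / c * (z * c / 2)) * (Real.cosh (z * c / 2) / Real.sinh (z * c / 2)) := by ring
    _ = 2 * z * (Real.cosh (z * c / 2) / Real.sinh (z * c / 2)) := by rw [h4]
  have ea : ∀ z : ℝ, 4 / a * (z * a / 2 * Real.cosh (z * a / 2) / Real.sinh (z * a / 2)) =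
      2 * z * (Real.cosh (z * a / 2) / Real.sinh (z * a / 2)) := fun z => key a z ha'
  have eb : ∀ z : ℝ, 4 / b * (z * b / 2 * Real.cosh (z * b / 2) / Real.sinh (z * b / 2)) =
      2 * z * (Real.cosh (z * b / 2) / Real.sinh (z * b / 2)) := fun z => key b z hb'
  rw [ea x, ea y] at hA'
  rw [eb x, eb y] at hB'
  have goal' : 2 * x * (Real.cosh (x * a / 2) / Real.sinh (x * a / 2)) +
      2 * x * (Real.cosh (x * b / 2) / Real.sinh (x * b / 2)) <
      2 * y * (Real.cosh (y * a / 2) / Real.sinh (y * a / 2)) +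
      2 * y * (Real.cosh (y * b / 2) / Real.sinh (y * b / 2)) := add_lt_add hA' hB'
  linarith [goal']

/-- lower bound: `2κ(coth(κa/2)+coth(κb/2)) > 4(1/a+1/b)`. -/
private lemma Q_gt (a b : ℝ) (ha : 0 < a) (hb : 0 < b) {κ : ℝ} (hκ : 0 < κ) :
    4 * (1 / a + 1 / b) < 2 * κ * (Real.cosh (κ * a / 2) / Real.sinh (κ * a / 2) +
      Real.cosh (κ * b / 2) / Real.sinh (κ * b / 2)) := by
  have key : ∀ c : ℝ, 0 < c → 4 / c < 2 * κ * (Real.cosh (κ * c / 2) / Real.sinh (κ * c / 2)) := by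
    intro c hc
    have hx : 0 < κ * c / 2 := by positivity
    have hs : 0 < Real.sinh (κ * c / 2) := Real.sinh_pos_iff.2 hx
    have h := xcosh_gt_sinh hx
    have hCS : 2 / (κ * c) < Real.cosh (κ * c / 2) / Real.sinh (κ * c / 2) := by
      rw [div_lt_div_iff₀ (by positivity) hs]
      nlinarith [h]
    have hm := mul_lt_mul_of_pos_left hCS (show (0:ℝ) < 2 * κ by positivity)
    have he : 2 * κ * (2 / (κ * c)) = 4 / c := by
      field_simp
      ring
    rw [he] at hm
    linarith
  have h1 := key a ha
  have h2 := key b hb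
  have : 4 * (1 / a + 1 / b) = 4 / a + 4 / b := by ring
  rw [this]
  linarith [h1, h2]

theorem stmt_6 (a b γ : ℝ) (ha : 0 < a) (hb : 0 < b)
    (N : Set ℝ)
    (hN : N = {κ : ℝ | 0 < κ ∧
      |γ * Real.sinh (κ * a) / (2 * κ) + Real.sinh (κ * (a + b)) / Real.sinh (κ * b)| ≤
        1 + Real.sinh (κ * a) / Real.sinh (κ * b)}) :
    (0 ≤ γ → N = ∅) ∧
    (-4 * (1 / a + 1 / b) ≤ γ → γ < 0 →
      ∀ κ₁ : ℝ, (0 < κ₁ ∧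
          γ / (2 * κ₁) = -Real.tanh (κ₁ * a / 2) - Real.tanh (κ₁ * b / 2)) →
        N = Set.Ioc 0 κ₁) ∧
    (γ < -4 * (1 / a + 1 / b) →
      ∀ κ₁ κ₂ : ℝ,
        (0 < κ₁ ∧ γ / (2 * κ₁) = -Real.tanh (κ₁ * a / 2) - Real.tanh (κ₁ * b / 2)) →
        (0 < κ₂ ∧ γ / (2 * κ₂) =
          -(Real.cosh (κ₂ * a / 2) / Real.sinh (κ₂ * a / 2)) -
            Real.cosh (κ₂ * b / 2) / Real.sinh (κ₂ * b / 2)) →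
        N = Set.Icc κ₂ κ₁) := by
  refine ⟨?_, ?_, ?_⟩
  · -- (i) γ ≥ 0
    intro hγ
    rw [hN, Set.eq_empty_iff_forall_notMem]
    rintro κ ⟨hκ, hcond⟩
    obtain ⟨h1, -⟩ := (mem_char a b γ κ ha hb hκ).1 hcond
    have p1 : 0 < Real.tanh (κ * a / 2) := tanh_pos' (by positivity)
    have p2 : 0 < Real.tanh (κ * b / 2) := tanh_pos' (by positivity)
    nlinarith
  · -- (ii)
    rintro hγ1 hγ2 κ₁ ⟨hκ₁, heq⟩
    rw [div_eq_iff (by positivity : (2 * κ₁) ≠ 0)] at heq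
    have hP1 : 2 * κ₁ * (Real.tanh (κ₁ * a / 2) + Real.tanh (κ₁ * b / 2)) = -γ := by
      linear_combination heq
    rw [hN]
    ext κ
    simp only [Set.mem_setOf_eq, Set.mem_Ioc]
    constructor
    · rintro ⟨hκ, hcond⟩
      refine ⟨hκ, ?_⟩
      obtain ⟨h1, -⟩ := (mem_char a b γ κ ha hb hκ).1 hcond
      by_contra hlt
      push_neg at hlt
      have := P_strictMono a b ha hb hκ₁ hlt
      linarith
    · rintro ⟨hκ, hle⟩
      refine ⟨hκ, (mem_char a b γ κ ha hb hκ).2 ⟨?_, ?_⟩⟩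
      · rcases eq_or_lt_of_le hle with h | h
        · rw [h]; linarith
        · have := P_strictMono a b ha hb hκ h
          linarith
      · have hq := Q_gt a b ha hb hκ
        have hγ' : -γ ≤ 4 * (1 / a + 1 / b) := by linarith
        linarith
  · -- (iii)
    rintro hγ κ₁ κ₂ ⟨hκ₁, heq1⟩ ⟨hκ₂, heq2⟩
    rw [div_eq_iff (by positivity : (2 * κ₁) ≠ 0)] at heq1
    rw [div_eq_iff (by positivity : (2 * κ₂) ≠ 0)] at heq2
    have hP1 : 2 * κ₁ * (Real.tanh (κ₁ * a / 2) + Real.tanh (κ₁ * b / 2)) = -γ := by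
      linear_combination heq1
    have hQ2 : 2 * κ₂ * (Real.cosh (κ₂ * a / 2) / Real.sinh (κ₂ * a / 2) +
        Real.cosh (κ₂ * b / 2) / Real.sinh (κ₂ * b / 2)) = -γ := by
      linear_combination heq2
    rw [hN]
    ext κ
    simp only [Set.mem_setOf_eq, Set.mem_Icc]
    constructor
    · rintro ⟨hκ, hcond⟩
      obtain ⟨h1, h2⟩ := (mem_char a b γ κ ha hb hκ).1 hcond
      constructor
      · by_contra hlt
        push_neg at hlt
        have := Q_strictMono a b ha hb hκ hlt
        linarith
      · by_contra hlt
        push_neg at hlt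
        have := P_strictMono a b ha hb hκ₁ hlt
        linarith
    · rintro ⟨h2, h1⟩
      have hκ : 0 < κ := lt_of_lt_of_le hκ₂ h2
      refine ⟨hκ, (mem_char a b γ κ ha hb hκ).2 ⟨?_, ?_⟩⟩
      · rcases eq_or_lt_of_le h1 with h | h
        · rw [h]; linarith
        · have := P_strictMono a b ha hb hκ h
          linarith
      · rcases eq_or_lt_of_le h2 with h | h
        · rw [← h]; linarith
        · have := Q_strictMono a b ha hb hκ₂ h
          linarith
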